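/- Let (A(E), [[·,·]]) be the Schouten bracket of a Lie algebroid E and Φ a 1-cocycle (dΦ=0). Define the Schouten–Jacobi bracket [[X,Y]]^Φ = [[X,Y]] + x X∧i_Φ Y - (-1)^x y i_Φ X ∧ Y, where x=|X|-1, y=|Y|-1. Then [[·,·]]^Φ satisfies the generalized Leibniz rule: [[X, Y∧Z]]^Φ = [[X,Y]]^Φ∧Z + (-1)^{x(y+1)} Y∧[[X,Z]]^Φ - [[X,1]]^Φ∧Y∧Z. -/

import Mathlib

/-- Abstract model of the graded commutative algebra `A(E)` of multivector fields /
multisections of a Lie algebroid, equipped with the wedge product and the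
Schouten–Nijenhuis bracket (sign convention: graded Lie bracket for the degree
shifted by one).  `H p X` means `X` is homogeneous of (multivector) degree `p`. -/
structure SchoutenAlgebra (V : Type*) [AddCommGroup V] [Module ℝ V] where
  wedge : V →ₗ[ℝ] V →ₗ[ℝ] V
  bracket : V →ₗ[ℝ] V →ₗ[ℝ] V
  H : ℤ → V → Prop
  one : V
  h_one : H 0 one
  wedge_one : ∀ X : V, wedge one X = X
  wedge_assoc : ∀ X Y Z : V, wedge (wedge X Y) Z = wedge X (wedge Y Z)
  wedge_comm : ∀ {p q : ℤ} {X Y : V}, H p X → H q Y →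
    wedge X Y = (Int.negOnePow (p * q) : ℤ) • wedge Y X
  wedge_mem : ∀ {p q : ℤ} {X Y : V}, H p X → H q Y → H (p + q) (wedge X Y)
  bracket_mem : ∀ {p q : ℤ} {X Y : V}, H p X → H q Y → H (p + q - 1) (bracket X Y)
  bracket_antisymm : ∀ {p q : ℤ} {X Y : V}, H p X → H q Y →
    bracket X Y = -((Int.negOnePow ((p - 1) * (q - 1)) : ℤ) • bracket Y X)
  bracket_jacobi : ∀ {p q : ℤ} {X Y : V}, H p X → H q Y → ∀ Z : V,
    bracket (bracket X Y) Z =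
      bracket X (bracket Y Z) -
        (Int.negOnePow ((p - 1) * (q - 1)) : ℤ) • bracket Y (bracket X Z)
  bracket_leibniz : ∀ {p q : ℤ} {X Y : V}, H p X → H q Y → ∀ Z : V,
    bracket X (wedge Y Z) =
      wedge (bracket X Y) Z + (Int.negOnePow ((p - 1) * q) : ℤ) • wedge Y (bracket X Z)

/-- The Schouten–Jacobi bracket `[[X,Y]]^Φ = [[X,Y]] + x X∧i_Φ Y - (-1)^x y i_Φ X∧Y`
associated with a Lie algebroid and a 1-cocycle `Φ` (contraction `iφ`), for `X`
of multivector degree `p` (shifted degree `x = p-1`) and `Y` of degree `q`. -/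
def brPhi {V : Type*} [AddCommGroup V] [Module ℝ V] (S : SchoutenAlgebra V)
    (iφ : V →ₗ[ℝ] V) (p q : ℤ) (X Y : V) : V :=
  S.bracket X Y + (p - 1) • S.wedge X (iφ Y)
    - ((Int.negOnePow (p - 1) : ℤ) * (q - 1)) • S.wedge (iφ X) Y

/-- The Schouten–Jacobi bracket `[[·,·]]^Φ` of a Lie algebroid `E`
with 1-cocycle `Φ` satisfies the generalized Leibniz rule
`[[X, Y∧Z]]^Φ = [[X,Y]]^Φ∧Z + (-1)^{x(y+1)} Y∧[[X,Z]]^Φ - [[X,1]]^Φ∧Y∧Z`. -/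
theorem schouten_jacobi_generalized_leibniz {V : Type*} [AddCommGroup V] [Module ℝ V]
    (S : SchoutenAlgebra V) (iφ : V →ₗ[ℝ] V)
    (hiφ_mem : ∀ {p : ℤ} {X : V}, S.H p X → S.H (p - 1) (iφ X))
    (hiφ_der : ∀ {p : ℤ} {X : V}, S.H p X → ∀ Y : V,
      iφ (S.wedge X Y) = S.wedge (iφ X) Y + (Int.negOnePow p : ℤ) • S.wedge X (iφ Y))
    (hiφ2 : ∀ X : V, iφ (iφ X) = 0)
    (hbr_one : ∀ X : V, S.bracket X S.one = 0)
    {p q r : ℤ} (X Y Z : V) (hX : S.H p X) (hY : S.H q Y) (hZ : S.H r Z) :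
    brPhi S iφ p (q + r) X (S.wedge Y Z) =
      S.wedge (brPhi S iφ p q X Y) Z
        + (Int.negOnePow ((p - 1) * q) : ℤ) • S.wedge Y (brPhi S iφ p r X Z)
        - S.wedge (brPhi S iφ p 0 X S.one) (S.wedge Y Z) := by
  -- helper: iφ(1) ∧ W = 0
  have hiφ1 : ∀ W : V, S.wedge (iφ S.one) W = 0 := by
    intro W
    have h := hiφ_der S.h_one W
    rw [S.wedge_one, S.wedge_one, Int.negOnePow_zero] at h
    simp only [Units.val_one, one_smul] at h
    simpa using h
  have h8 : S.wedge (iφ X) S.one = iφ X := by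
    rw [S.wedge_comm (hiφ_mem hX) S.h_one]
    simp [S.wedge_one]
  have h5 : S.wedge Y (S.wedge X (iφ Z))
      = (Int.negOnePow (p * q) : ℤ) • S.wedge X (S.wedge Y (iφ Z)) := by
    rw [← S.wedge_assoc, S.wedge_comm hY hX, mul_comm q p]
    rw [map_zsmul, LinearMap.smul_apply, S.wedge_assoc]
  have h6 : S.wedge Y (S.wedge (iφ X) Z)
      = (Int.negOnePow (q * (p - 1)) : ℤ) • S.wedge (iφ X) (S.wedge Y Z) := by
    rw [← S.wedge_assoc, S.wedge_comm hY (hiφ_mem hX)]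
    rw [map_zsmul, LinearMap.smul_apply, S.wedge_assoc]
  have hX0 : S.wedge X (S.wedge (iφ S.one) (S.wedge Y Z)) = 0 := by
    rw [hiφ1, map_zero]
  simp only [brPhi, S.bracket_leibniz hX hY Z, hiφ_der hY Z, hbr_one,
    map_add, map_smul, map_zsmul, map_sub, LinearMap.add_apply, LinearMap.smul_apply,
    LinearMap.sub_apply, S.wedge_assoc, h5, h6, h8, hX0, hiφ1, map_zero,
    LinearMap.zero_apply, zero_add, add_zero, smul_zero]
  have e1 : ((p - 1) * q).negOnePow = (p * q - q).negOnePow := by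
    congr 1; ring
  have e2 : (q * (p - 1)).negOnePow = (p * q - q).negOnePow := by
    congr 1; ring
  have e3 : (p - 1).negOnePow = (-1 + p).negOnePow := by
    congr 1; ring
  simp only [e1, e2, e3]
  have hs1 : ((p * q - q).negOnePow : ℤ) * ((p * q).negOnePow : ℤ) = (q.negOnePow : ℤ) := by
    rw [← Units.val_mul, ← Int.negOnePow_add]
    norm_cast
    rw [Int.negOnePow_eq_iff]
    exact ⟨p * q - q, by ring⟩
  have hs2 : ((p * q - q).negOnePow : ℤ) ^ 2 = 1 := by
    rw [sq, ← Units.val_mul, ← Int.negOnePow_add,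
      show (p * q - q) + (p * q - q) = 2 * (p * q - q) by ring,
      Int.negOnePow_two_mul, Units.val_one]
  match_scalars
  · ring
  · ring
  · ring
  · linear_combination (1 - p) * hs1
  · linear_combination (((-1 + p).negOnePow : ℤ) * r - ((-1 + p).negOnePow : ℤ)) * hs2
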